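/- For every type σ and all values a, b in Bσ: B̂(≐σ) a b = 1 if and only if a = b; that is, the closed term ≐σ denotes the identity predicate on Bσ. -/

import Mathlib

namespace PTT


/-- Simple types over a single base type `B`. -/
inductive Ty : Type
  | base : Ty
  | arrow : Ty → Ty → Ty
deriving DecidableEq

/-- Names: the constants `⊥` and `→`, and variables (an index together with a type). -/
inductive Name : Type
  | bot : Name
  | imp : Name
  | var : ℕ → Ty → Name
deriving DecidableEq

/-- The type of a name. -/
def Name.ty : Name → Ty
  | .bot => .base
  | .imp => .arrow .base (.arrow .base .base)
  | .var _ σ => σ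

/-- Terms: names, abstraction over a variable, application. -/
inductive Tm : Type
  | name : Name → Tm
  | lam : ℕ → Ty → Tm → Tm
  | app : Tm → Tm → Tm
deriving DecidableEq

/-- The term `⊥`. -/
def botTm : Tm := .name .bot

/-- The variable `(n, σ)` as a term. -/
def vr (n : ℕ) (σ : Ty) : Tm := .name (.var n σ)

/-- Implication `s → t`. -/
def impTm (s t : Tm) : Tm := .app (.app (.name .imp) s) t

/-- `⊤ := ⊥ → ⊥`. -/
def topTm : Tm := impTm botTm botTm

/-- `¬ s := s → ⊥`. -/
def negTm (s : Tm) : Tm := impTm s botTm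

/-- `s ∨ t := (s → t) → t`. -/
def orTm (s t : Tm) : Tm := impTm (impTm s t) t

/-- `s ∧ t := ¬(¬s ∨ ¬t)`. -/
def andTm (s t : Tm) : Tm := negTm (orTm (negTm s) (negTm t))

/-- `s ≡ t := (s → t) ∧ (t → s)`. -/
def equivTm (s t : Tm) : Tm := andTm (impTm s t) (impTm t s)

/-- The typing relation. -/
inductive HasTy : Tm → Ty → Prop
  | name (x : Name) : HasTy (.name x) x.ty
  | lam {n σ s τ} : HasTy s τ → HasTy (.lam n σ s) (.arrow σ τ)
  | app {s t σ τ} : HasTy s (.arrow σ τ) → HasTy t σ → HasTy (.app s t) τ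

/-- Free variables of a term. -/
def fv : Tm → Finset (ℕ × Ty)
  | .name (.var n σ) => {(n, σ)}
  | .name _ => ∅
  | .lam n σ s => (fv s).erase (n, σ)
  | .app s t => fv s ∪ fv t

/-- A term is closed if it has no free variables. -/
def Closed (s : Tm) : Prop := fv s = ∅

/-- Capture-free parallel substitution (bound variables are renamed). -/
def substAux (ρ : ℕ × Ty → Tm) : Tm → Tm
  | .name (.var n σ) => ρ (n, σ)
  | .name x => .name x
  | .app s t => .app (substAux ρ s) (substAux ρ t)
  | .lam n σ s =>
      let used : Finset ℕ :=
        ((fv s).erase (n, σ)).biUnion (fun p => (fv (ρ p)).image Prod.fst)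
      let m : ℕ := used.sup id + 1
      .lam m σ (substAux (Function.update ρ (n, σ) (vr m σ)) s)

/-- Capture-free substitution `s[(n,σ) := t]`. -/
def subst (s : Tm) (n : ℕ) (σ : Ty) (t : Tm) : Tm :=
  substAux (Function.update (fun p => vr p.1 p.2) (n, σ) t) s

/-- Contexts: terms with exactly one hole (possibly under binders). -/
inductive Ctx : Type
  | hole : Ctx
  | lam : ℕ → Ty → Ctx → Ctx
  | appL : Ctx → Tm → Ctx
  | appR : Tm → Ctx → Ctx

/-- Filling the hole of a context with a term (capturing is allowed). -/
def Ctx.fill : Ctx → Tm → Tm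
  | .hole, s => s
  | .lam n σ C, s => .lam n σ (C.fill s)
  | .appL C t, s => .app (C.fill s) t
  | .appR t C, s => .app t (C.fill s)

/-- `C` captures the variable `p` if the hole of `C` lies below a binder for `p`. -/
def Ctx.captures : Ctx → ℕ × Ty → Prop
  | .hole, _ => False
  | .lam n σ C, p => p = (n, σ) ∨ C.captures p
  | .appL C _, p => C.captures p
  | .appR _ C, p => C.captures p

/-- `C` is admissible for `A` if it captures no variable free in `A`. -/
def Ctx.Admissible (C : Ctx) (A : Finset Tm) : Prop :=
  ∀ p ∈ A.biUnion fv, ¬ C.captures p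

/-- `s` is a subterm of `t`. -/
def Subterm (s t : Tm) : Prop := ∃ C : Ctx, C.fill s = t

/-- β-redexes. -/
def IsBetaRedex : Tm → Prop
  | .app (.lam _ _ _) _ => True
  | _ => False

/-- A term is β-normal if none of its subterms is a β-redex. -/
def BetaNormal (t : Tm) : Prop := ∀ s, Subterm s t → ¬ IsBetaRedex s

/-- Lambda equivalence: the least equivalence on well-typed terms containing
α-, β-, η-conversion and closed under arbitrary contexts. -/
inductive LamEq : Tm → Tm → Prop
  | refl {s σ} : HasTy s σ → LamEq s s
  | symm {s t} : LamEq s t → LamEq t s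
  | trans {s t u} : LamEq s t → LamEq t u → LamEq s u
  | alpha {n m σ s τ} : HasTy (.lam n σ s) τ → (m, σ) ∉ fv s →
      LamEq (.lam n σ s) (.lam m σ (subst s n σ (vr m σ)))
  | beta {n σ s t τ} : HasTy (.app (.lam n σ s) t) τ →
      LamEq (.app (.lam n σ s) t) (subst s n σ t)
  | eta {n σ s τ} : HasTy (.lam n σ (.app s (vr n σ))) τ → (n, σ) ∉ fv s →
      LamEq (.lam n σ (.app s (vr n σ))) s
  | ctx {s t σ} (C : Ctx) : LamEq s t → HasTy (C.fill s) σ → LamEq (C.fill s) (C.fill t)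

/-- The standard set-theoretic interpretation of types: `B` is interpreted as the
two truth values (`Bool`), functional types as full function spaces. -/
def Ty.sem : Ty → Type
  | .base => Bool
  | .arrow σ τ => σ.sem → τ.sem

def Ty.semDefault : (σ : Ty) → σ.sem
  | .base => false
  | .arrow _ τ => fun _ => τ.semDefault

instance (σ : Ty) : Inhabited σ.sem := ⟨σ.semDefault⟩

noncomputable instance Ty.semFintype : (σ : Ty) → Fintype σ.sem
  | .base => inferInstanceAs (Fintype Bool)
  | .arrow σ τ =>
      letI := Ty.semFintype σ
      letI := Ty.semFintype τ
      letI := Classical.decEq σ.sem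
      inferInstanceAs (Fintype (σ.sem → τ.sem))

def Ty.semCast {σ τ : Ty} (h : σ = τ) (v : σ.sem) : τ.sem := h ▸ v

/-- An interpretation assigns to every variable a value of the corresponding type
(the constants `⊥` and `→` have their values fixed). -/
def Interp : Type := ℕ → (σ : Ty) → σ.sem

def Interp.update (I : Interp) (n : ℕ) (σ : Ty) (v : σ.sem) : Interp :=
  fun m τ => if h : m = n ∧ τ = σ then Ty.semCast h.2.symm v else I m τ

/-- Type inference. -/
def typeOf : Tm → Option Ty
  | .name x => some x.ty
  | .lam _ σ s => (typeOf s).map (Ty.arrow σ)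
  | .app s t =>
      match typeOf s, typeOf t with
      | some (.arrow σ τ), some σ' => if σ = σ' then some τ else none
      | _, _ => none

/-- The canonical extension `Î` of an interpretation to all terms: `eval I s σ`
is the value of `s` at type `σ` (on well-typed terms this is the usual
denotation; junk default values are used at type mismatches). -/
def eval (I : Interp) : Tm → (σ : Ty) → σ.sem
  | .name (.var n τ), σ => if h : τ = σ then Ty.semCast h (I n τ) else default
  | .name .bot, σ =>
      match σ with
      | .base => false
      | _ => default
  | .name .imp, σ =>
      match σ with
      | .arrow .base (.arrow .base .base) => fun a b => !a || b
      | _ => default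
  | .app s t, σ =>
      match typeOf t with
      | some τ => eval I s (.arrow τ σ) (eval I t τ)
      | none => default
  | .lam n τ s, σ =>
      match σ with
      | .base => default
      | .arrow σ₁ σ₂ =>
          if h : σ₁ = τ then
            fun a => eval (I.update n τ (Ty.semCast h a)) s σ₂
          else default

/-- `I` satisfies the formula `s` if `Î s = 1`. -/
def Satisfies (I : Interp) (s : Tm) : Prop := eval I s .base = true

/-- A formula is valid if every interpretation satisfies it. -/
def ValidFml (s : Tm) : Prop := ∀ I : Interp, Satisfies I s

/-- A sequent `A ⇒ s` is valid if every interpretation satisfying `A` satisfies `s`. -/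
def ValidSeq (A : Finset Tm) (s : Tm) : Prop :=
  ∀ I : Interp, (∀ t ∈ A, Satisfies I t) → Satisfies I s

/-- Finite disjunction (the empty disjunction is `⊥`). -/
def orList : List Tm → Tm
  | [] => botTm
  | [s] => s
  | s :: l => orTm s (orList l)

/-- Finite conjunction (the empty conjunction is `⊤`). -/
def andList : List Tm → Tm
  | [] => topTm
  | [s] => s
  | s :: l => andTm s (andList l)

/-- The argument types of a type (every type has the form `σ₁…σₙB`). -/
def Ty.args : Ty → List Ty
  | .base => []
  | .arrow σ τ => σ :: τ.args

/-- Tuples of values along a list of types. -/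
def Tup : List Ty → Type
  | [] => PUnit
  | σ :: l => σ.sem × Tup l

noncomputable instance TupFintype : (l : List Ty) → Fintype (Tup l)
  | [] => inferInstanceAs (Fintype PUnit)
  | σ :: l =>
      letI := TupFintype l
      inferInstanceAs (Fintype (σ.sem × Tup l))

/-- Applying a function value to a tuple of arguments (the result type is `B`). -/
def Ty.applyTup : (σ : Ty) → σ.sem → Tup σ.args → Bool
  | .base, a, _ => a
  | .arrow _ τ, f, p => τ.applyTup (f p.1) p.2

/-- Quote/identity data for each type in a list: a quote function and the term `≐`. -/
def ArgData : List Ty → Type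
  | [] => PUnit
  | σ :: l => ((σ.sem → Tm) × Tm) × ArgData l

/-- The conjunction list `x_k ≐_{σ_k} (↓_{σ_k} b_k), …` for a tuple `b`. -/
def eqConj : (l : List Ty) → ArgData l → ℕ → Tup l → List Tm
  | [], _, _, _ => []
  | σ :: l, (d, ds), k, (b, bs) =>
      (.app (.app d.2 (vr k σ)) (d.1 b)) :: eqConj l ds (k + 1) bs

/-- `λ x_k : σ_k. …` binding one variable for each type in the list. -/
def mkLams : (l : List Ty) → ℕ → Tm → Tm
  | [], _, body => body
  | σ :: l, k, body => .lam k σ (mkLams l (k + 1) body)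

/-- The body of the quote term
`↓_{σ₁…σₙB} a := λx₁…xₙ. ⋁_{b₁…bₙ, a b₁…bₙ = 1} ⋀_j x_j ≐_{σ_j} (↓_{σ_j} b_j)`. -/
noncomputable def quoteBodyAux (σ : Ty) (ad : ArgData σ.args) (a : σ.sem) : Tm :=
  mkLams σ.args 0 (orList
    ((((Finset.univ : Finset (Tup σ.args)).toList.filter
        (fun b => σ.applyTup a b))).map
      (fun b => andList (eqConj σ.args ad 0 b))))

/-- `∀σ := λf. ⋀_{a ∈ Bσ} f (↓σ a)`, given the quote function for `σ`. -/
noncomputable def allTmAux (σ : Ty) (q : σ.sem → Tm) : Tm :=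
  .lam 0 (.arrow σ .base)
    (andList (((Finset.univ : Finset σ.sem).toList).map
      (fun a => .app (vr 0 (.arrow σ .base)) (q a))))

mutual
  /-- The quote function `↓σ` together with the identity term `≐σ`. -/
  noncomputable def quoteEq : (σ : Ty) → ((σ.sem → Tm) × Tm)
    | .base =>
        (fun a => quoteBodyAux .base PUnit.unit a,
         .lam 0 .base (.lam 1 .base (equivTm (vr 0 .base) (vr 1 .base))))
    | .arrow σ τ =>
        (fun a => quoteBodyAux (.arrow σ τ) ((quoteEq σ, argData τ) : ArgData (σ :: τ.args)) a,
         .lam 0 (.arrow σ τ) (.lam 1 (.arrow σ τ)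
           (.app (allTmAux σ (quoteEq σ).1)
             (.lam 2 σ
               (.app (.app (quoteEq τ).2
                  (.app (vr 0 (.arrow σ τ)) (vr 2 σ)))
                (.app (vr 1 (.arrow σ τ)) (vr 2 σ)))))))
  /-- Quote/identity data for all argument types of a type. -/
  noncomputable def argData : (σ : Ty) → ArgData σ.args
    | .base => PUnit.unit
    | .arrow σ τ => ((quoteEq σ, argData τ) : ArgData (σ :: τ.args))
end

/-- The quote function `↓σ : Bσ → Λ`. -/
noncomputable def quote (σ : Ty) (a : σ.sem) : Tm := (quoteEq σ).1 a

/-- The term `≐σ : σσB` denoting the identity predicate on `Bσ`. -/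
noncomputable def eqTm (σ : Ty) : Tm := (quoteEq σ).2

/-- The term `∀σ : (σB)B`. -/
noncomputable def allTm (σ : Ty) : Tm := allTmAux σ (quote σ)


/-- Propositional formulas: `s ::= x | ⊥ | s → s` with `x` a variable of type `B`. -/
inductive Propositional : Tm → Prop
  | var (n : ℕ) : Propositional (vr n .base)
  | bot : Propositional botTm
  | imp {s t} : Propositional s → Propositional t → Propositional (impTm s t)

/-- A type-respecting substitution of terms for variables. -/
def IsSubstitution (ρ : ℕ × Ty → Tm) : Prop := ∀ n σ, HasTy (ρ (n, σ)) σ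

/-- A formula is tautologous if it is a substitution instance of a tautology
(a valid propositional formula). -/
def Tautologous (s : Tm) : Prop :=
  ∃ t ρ, Propositional t ∧ ValidFml t ∧ IsSubstitution ρ ∧ s = substAux ρ t

/-- The proof system: Triv, Weak, Ded, MP, DN, Lam and Boolean replacement (BR).
Sequents consist of a finite set of formulas and a formula. -/
inductive Ded : Finset Tm → Tm → Prop
  | triv {A s} : (∀ t ∈ A, HasTy t .base) → HasTy s .base → Ded (insert s A) s
  | weak {A s t} : HasTy s .base → Ded A t → Ded (insert s A) t
  | ded {A s t} : Ded (insert s A) t → Ded A (impTm s t)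
  | mp {A s t} : Ded A (impTm s t) → Ded A s → Ded A t
  | dn {A s} : Ded A (negTm (negTm s)) → Ded A s
  | lam {A s t} : Ded A s → LamEq s t → HasTy t .base → Ded A t
  | br {A s t} (C : Ctx) : C.Admissible A → Ded A (equivTm s t) →
      Ded A (C.fill s) → HasTy (C.fill t) .base → Ded A (C.fill t)


section Aux

lemma semCast_rfl {σ : Ty} (h : σ = σ) (v : σ.sem) : Ty.semCast h v = v := rfl

lemma update_same (I : Interp) (n : ℕ) (σ : Ty) (v : σ.sem) : I.update n σ v n σ = v := by
  rw [Interp.update, dif_pos ⟨rfl, rfl⟩, semCast_rfl]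

lemma update_ne (I : Interp) {n : ℕ} {σ : Ty} (v : σ.sem) {m : ℕ} {τ : Ty}
    (h : ¬ (m = n ∧ τ = σ)) : I.update n σ v m τ = I m τ := by
  rw [Interp.update, dif_neg h]

lemma eval_vr (I : Interp) (n : ℕ) (σ : Ty) : eval I (vr n σ) σ = I n σ := by
  show (if h : σ = σ then Ty.semCast h (I n σ) else default) = I n σ
  rw [dif_pos rfl, semCast_rfl]

lemma typeOf_vr (n : ℕ) (σ : Ty) : typeOf (vr n σ) = some σ := rfl

lemma typeOf_app' {s t : Tm} {σ τ : Ty} (hs : typeOf s = some (.arrow σ τ))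
    (ht : typeOf t = some σ) : typeOf (.app s t) = some τ := by
  simp [typeOf, hs, ht]

lemma eval_app' (I : Interp) {s t : Tm} {τ : Ty} (σ : Ty) (ht : typeOf t = some τ) :
    eval I (.app s t) σ = eval I s (.arrow τ σ) (eval I t τ) := by
  show (match typeOf t with
      | some τ => eval I s (.arrow τ σ) (eval I t τ)
      | none => default) = _
  rw [ht]

lemma eval_lam (I : Interp) (n : ℕ) (σ τ : Ty) (s : Tm) :
    eval I (.lam n σ s) (.arrow σ τ) = fun a => eval (I.update n σ a) s τ := by
  show (if h : σ = σ then fun a => eval (I.update n σ (Ty.semCast h a)) s τ else default) = _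
  rw [dif_pos rfl]
  simp only [semCast_rfl]

lemma eval_lam_app (I : Interp) (n : ℕ) (σ τ : Ty) (s : Tm) (a : σ.sem) :
    eval I (.lam n σ s) (.arrow σ τ) a = eval (I.update n σ a) s τ := by
  rw [eval_lam]

lemma typeOf_bot : typeOf botTm = some .base := rfl

lemma typeOf_impTm {s t : Tm} (hs : typeOf s = some .base) (ht : typeOf t = some .base) :
    typeOf (impTm s t) = some .base := by
  simp [impTm, typeOf, Name.ty, hs, ht]

lemma eval_impTm (I : Interp) {s t : Tm} (hs : typeOf s = some .base)
    (ht : typeOf t = some .base) :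
    eval I (impTm s t) .base = (!(eval I s .base) || eval I t .base) := by
  rw [impTm, eval_app' I .base ht, eval_app' I (.arrow .base .base) hs]
  rfl

lemma typeOf_negTm {s : Tm} (hs : typeOf s = some .base) : typeOf (negTm s) = some .base :=
  typeOf_impTm hs typeOf_bot

lemma eval_negTm (I : Interp) {s : Tm} (hs : typeOf s = some .base) :
    eval I (negTm s) .base = !(eval I s .base) := by
  rw [negTm, eval_impTm I hs typeOf_bot]
  cases eval I s .base <;> rfl

lemma typeOf_orTm {s t : Tm} (hs : typeOf s = some .base) (ht : typeOf t = some .base) :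
    typeOf (orTm s t) = some .base := typeOf_impTm (typeOf_impTm hs ht) ht

lemma eval_orTm (I : Interp) {s t : Tm} (hs : typeOf s = some .base)
    (ht : typeOf t = some .base) :
    eval I (orTm s t) .base = (eval I s .base || eval I t .base) := by
  rw [orTm, eval_impTm I (typeOf_impTm hs ht) ht, eval_impTm I hs ht]
  cases eval I s .base <;> cases eval I t .base <;> rfl

lemma typeOf_andTm {s t : Tm} (hs : typeOf s = some .base) (ht : typeOf t = some .base) :
    typeOf (andTm s t) = some .base :=
  typeOf_negTm (typeOf_orTm (typeOf_negTm hs) (typeOf_negTm ht))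

lemma eval_andTm (I : Interp) {s t : Tm} (hs : typeOf s = some .base)
    (ht : typeOf t = some .base) :
    eval I (andTm s t) .base = (eval I s .base && eval I t .base) := by
  rw [andTm, eval_negTm I (typeOf_orTm (typeOf_negTm hs) (typeOf_negTm ht)),
    eval_orTm I (typeOf_negTm hs) (typeOf_negTm ht), eval_negTm I hs, eval_negTm I ht]
  cases eval I s .base <;> cases eval I t .base <;> rfl

lemma typeOf_equivTm {s t : Tm} (hs : typeOf s = some .base) (ht : typeOf t = some .base) :
    typeOf (equivTm s t) = some .base :=
  typeOf_andTm (typeOf_impTm hs ht) (typeOf_impTm ht hs)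

lemma eval_equivTm (I : Interp) {s t : Tm} (hs : typeOf s = some .base)
    (ht : typeOf t = some .base) :
    (eval I (equivTm s t) .base = true ↔ eval I s .base = eval I t .base) := by
  rw [equivTm, eval_andTm I (typeOf_impTm hs ht) (typeOf_impTm ht hs),
    eval_impTm I hs ht, eval_impTm I ht hs]
  cases hs' : eval I s .base <;> cases ht' : eval I t .base <;> simp <;> exact ⟨fun _ => rfl, fun _ => rfl⟩

lemma eval_topTm (I : Interp) : eval I topTm .base = true := rfl

lemma typeOf_top : typeOf topTm = some .base := rfl

lemma typeOf_orList {l : List Tm} (h : ∀ s ∈ l, typeOf s = some .base) :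
    typeOf (orList l) = some .base := by
  induction l with
  | nil => rfl
  | cons s l ih =>
    cases l with
    | nil => exact h s (by simp)
    | cons t l' =>
      rw [show orList (s :: t :: l') = orTm s (orList (t :: l')) from rfl]
      exact typeOf_orTm (h s (by simp)) (ih (fun u hu => h u (by simp [hu])))

lemma eval_orList (I : Interp) {l : List Tm} (h : ∀ s ∈ l, typeOf s = some .base) :
    eval I (orList l) .base = l.any (fun s => eval I s .base) := by
  induction l with
  | nil => rfl
  | cons s l ih =>
    cases l with
    | nil =>
      show eval I s .base = (eval I s .base || false)
      cases eval I s .base <;> rfl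
    | cons t l' =>
      rw [show orList (s :: t :: l') = orTm s (orList (t :: l')) from rfl,
        eval_orTm I (h s (by simp)) (typeOf_orList (fun u hu => h u (by simp [hu]))),
        ih (fun u hu => h u (by simp [hu]))]
      rfl

lemma typeOf_andList {l : List Tm} (h : ∀ s ∈ l, typeOf s = some .base) :
    typeOf (andList l) = some .base := by
  induction l with
  | nil => rfl
  | cons s l ih =>
    cases l with
    | nil => exact h s (by simp)
    | cons t l' =>
      rw [show andList (s :: t :: l') = andTm s (andList (t :: l')) from rfl]
      exact typeOf_andTm (h s (by simp)) (ih (fun u hu => h u (by simp [hu])))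

lemma eval_andList (I : Interp) {l : List Tm} (h : ∀ s ∈ l, typeOf s = some .base) :
    eval I (andList l) .base = l.all (fun s => eval I s .base) := by
  induction l with
  | nil => rfl
  | cons s l ih =>
    cases l with
    | nil =>
      show eval I s .base = (eval I s .base && true)
      cases eval I s .base <;> rfl
    | cons t l' =>
      rw [show andList (s :: t :: l') = andTm s (andList (t :: l')) from rfl,
        eval_andTm I (h s (by simp)) (typeOf_andList (fun u hu => h u (by simp [hu]))),
        ih (fun u hu => h u (by simp [hu]))]
      rfl

lemma eval_andList_iff (I : Interp) {l : List Tm} (h : ∀ s ∈ l, typeOf s = some .base) :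
    (eval I (andList l) .base = true ↔ ∀ s ∈ l, eval I s .base = true) := by
  rw [eval_andList I h]
  exact List.all_eq_true

lemma eval_orList_iff (I : Interp) {l : List Tm} (h : ∀ s ∈ l, typeOf s = some .base) :
    (eval I (orList l) .base = true ↔ ∃ s ∈ l, eval I s .base = true) := by
  rw [eval_orList I h]
  exact List.any_eq_true

end Aux
section Aux2

/-- Update an interpretation along a tuple of values for variables `k, k+1, …`. -/
def updTup : Interp → ℕ → (l : List Ty) → Tup l → Interp
  | I, _, [], _ => I
  | I, k, σ :: l, p => updTup (I.update k σ p.1) (k + 1) l p.2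

/-- Read back a tuple of values for variables `k, k+1, …`. -/
def readTup (I : Interp) : ℕ → (l : List Ty) → Tup l
  | _, [] => PUnit.unit
  | k, σ :: l => (I k σ, readTup I (k + 1) l)

lemma updTup_lt : ∀ (l : List Ty) (I : Interp) (k : ℕ) (p : Tup l) (m : ℕ) (τ : Ty),
    m < k → updTup I k l p m τ = I m τ
  | [], _, _, _, _, _, _ => rfl
  | σ :: l, I, k, p, m, τ, h => by
    rw [updTup, updTup_lt l _ (k + 1) p.2 m τ (by omega)]
    exact update_ne I _ (by rintro ⟨rfl, -⟩; omega)

lemma readTup_updTup : ∀ (l : List Ty) (I : Interp) (k : ℕ) (p : Tup l),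
    readTup (updTup I k l p) k l = p
  | [], _, _, p => by cases p; rfl
  | σ :: l, I, k, p => by
    rw [readTup, updTup, updTup_lt l _ (k + 1) p.2 k σ (Nat.lt_succ_self k), update_same,
      readTup_updTup l _ (k + 1) p.2]
    rfl

lemma applyTup_ext : ∀ (σ : Ty) (f g : σ.sem),
    (∀ p : Tup σ.args, σ.applyTup f p = σ.applyTup g p) → f = g
  | .base, _, _, h => h PUnit.unit
  | .arrow σ τ, f, g, h => funext fun a => applyTup_ext τ (f a) (g a) (fun p => h (a, p))

lemma typeOf_mkLams : ∀ (σ : Ty) (k : ℕ) (body : Tm), typeOf body = some .base →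
    typeOf (mkLams σ.args k body) = some σ
  | .base, _, _, h => h
  | .arrow σ τ, k, body, h => by
    rw [show (Ty.arrow σ τ).args = σ :: τ.args from rfl, mkLams]
    simp [typeOf, typeOf_mkLams τ (k + 1) body h]

lemma eval_mkLams : ∀ (σ : Ty) (I : Interp) (k : ℕ) (body : Tm) (p : Tup σ.args),
    σ.applyTup (eval I (mkLams σ.args k body) σ) p = eval (updTup I k σ.args p) body .base
  | .base, _, _, _, _ => rfl
  | .arrow σ τ, I, k, body, p => by
    show τ.applyTup (eval I (.lam k σ (mkLams τ.args (k + 1) body)) (.arrow σ τ) p.1) p.2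
      = eval (updTup (I.update k σ p.1) (k + 1) τ.args p.2) body .base
    rw [eval_lam_app]
    exact eval_mkLams τ (I.update k σ p.1) (k + 1) body p.2

/-- The combined correctness statement for `quote σ` and `eqTm σ`. -/
def GoodQuote (σ : Ty) : Prop :=
  (∀ (I : Interp) (a : σ.sem), eval I (quote σ a) σ = a) ∧
  (∀ (I : Interp) (a b : σ.sem),
    eval I (eqTm σ) (.arrow σ (.arrow σ .base)) a b = true ↔ a = b) ∧
  (∀ a : σ.sem, typeOf (quote σ a) = some σ) ∧
  typeOf (eqTm σ) = some (.arrow σ (.arrow σ .base))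

/-- The argument data consists of the quote/eq pairs. -/
def DataOK : (l : List Ty) → ArgData l → Prop
  | [], _ => True
  | σ :: l, d => d.1 = quoteEq σ ∧ DataOK l d.2

lemma dataOK_argData : ∀ σ : Ty, DataOK σ.args (argData σ)
  | .base => trivial
  | .arrow σ τ => by
    rw [argData]
    exact ⟨rfl, dataOK_argData τ⟩

lemma quote_eq_body (σ : Ty) (a : σ.sem) : quote σ a = quoteBodyAux σ (argData σ) a := by
  cases σ <;> simp [quote, quoteEq, argData]

lemma eqConj_cons (σ : Ty) (l : List Ty) (d : (σ.sem → Tm) × Tm) (ds : ArgData l)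
    (k : ℕ) (b : Tup (σ :: l)) :
    eqConj (σ :: l) (d, ds) k b
      = (.app (.app d.2 (vr k σ)) (d.1 b.1)) :: eqConj l ds (k + 1) b.2 := rfl

lemma typeOf_eqConj : ∀ (l : List Ty) (ad : ArgData l), DataOK l ad →
    (∀ ρ ∈ l, GoodQuote ρ) → ∀ (k : ℕ) (b : Tup l), ∀ s ∈ eqConj l ad k b,
    typeOf s = some .base
  | [], _, _, _, _, _ => by simp [eqConj]
  | σ :: l, ⟨d, ds⟩, hok, hg, k, b => by
    obtain ⟨hd, hds⟩ := hok
    intro s hs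
    rw [eqConj_cons] at hs
    rcases List.mem_cons.1 hs with rfl | hs
    · subst hd
      have hσ := hg σ List.mem_cons_self
      exact typeOf_app' (typeOf_app' hσ.2.2.2 (typeOf_vr k σ)) (hσ.2.2.1 b.1)
    · exact typeOf_eqConj l ds hds (fun ρ h => hg ρ (List.mem_cons_of_mem _ h)) (k + 1) b.2 s hs

lemma eqConj_iff : ∀ (l : List Ty) (ad : ArgData l), DataOK l ad →
    (∀ ρ ∈ l, GoodQuote ρ) → ∀ (k : ℕ) (b : Tup l) (J : Interp),
    ((∀ s ∈ eqConj l ad k b, eval J s .base = true) ↔ readTup J k l = b)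
  | [], _, _, _, k, b, J => by
    cases b; simp [eqConj, readTup]; rfl
  | σ :: l, ⟨d, ds⟩, hok, hg, k, b, J => by
    obtain ⟨hd, hds⟩ := hok
    subst hd
    have hσ := hg σ List.mem_cons_self
    have ih := eqConj_iff l ds hds (fun ρ h => hg ρ (List.mem_cons_of_mem _ h)) (k + 1) b.2 J
    have hhead : eval J (.app (.app (quoteEq σ).2 (vr k σ)) ((quoteEq σ).1 b.1)) .base = true
        ↔ J k σ = b.1 := by
      rw [show (quoteEq σ).2 = eqTm σ from rfl, show (quoteEq σ).1 b.1 = quote σ b.1 from rfl,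
        eval_app' J .base (hσ.2.2.1 b.1), eval_app' J (.arrow σ .base) (typeOf_vr k σ),
        eval_vr, hσ.1 J b.1]
      exact hσ.2.1 J (J k σ) b.1
    rw [eqConj_cons, readTup]
    simp only [List.forall_mem_cons, hhead, ih]
    exact ⟨fun h => Prod.ext h.1 h.2, by rintro rfl; exact ⟨rfl, rfl⟩⟩

end Aux2
section Aux3

lemma bool_eq_of_iff {x y : Bool} (h : (x = true) ↔ (y = true)) : x = y := by
  cases x <;> cases y <;> simp_all

lemma typeOf_lam (n : ℕ) (σ : Ty) (s : Tm) :
    typeOf (.lam n σ s) = (typeOf s).map (Ty.arrow σ) := rfl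

lemma quote_good (σ : Ty) (hargs : ∀ ρ ∈ σ.args, GoodQuote ρ) :
    (∀ (I : Interp) (a : σ.sem), eval I (quote σ a) σ = a) ∧
    (∀ a : σ.sem, typeOf (quote σ a) = some σ) := by
  have hok := dataOK_argData σ
  have htyBody : ∀ a : σ.sem,
      typeOf (orList ((((Finset.univ : Finset (Tup σ.args)).toList.filter
          (fun b => σ.applyTup a b))).map
        (fun b => andList (eqConj σ.args (argData σ) 0 b)))) = some .base := by
    intro a
    refine typeOf_orList ?_
    intro s hs
    rcases List.mem_map.1 hs with ⟨b, _, rfl⟩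
    exact typeOf_andList (typeOf_eqConj _ _ hok hargs 0 b)
  constructor
  · intro I a
    apply applyTup_ext
    intro p
    rw [quote_eq_body, quoteBodyAux, eval_mkLams _ _ _ _ p]
    apply bool_eq_of_iff
    refine Iff.trans (eval_orList_iff _ (fun s hs => by
      rcases List.mem_map.1 hs with ⟨b, _, rfl⟩
      exact typeOf_andList (typeOf_eqConj _ _ hok hargs 0 b))) ?_
    have hread : readTup (updTup I 0 σ.args p) 0 σ.args = p := readTup_updTup σ.args I 0 p
    constructor
    · rintro ⟨s, hs, hev⟩
      rcases List.mem_map.1 hs with ⟨b, hb, rfl⟩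
      rcases List.mem_filter.1 hb with ⟨-, hbp⟩
      have h1 := (eval_andList_iff _ (typeOf_eqConj _ _ hok hargs 0 b)).1 hev
      have hpb : readTup (updTup I 0 σ.args p) 0 σ.args = b :=
        (eqConj_iff _ _ hok hargs 0 b _).1 h1
      rw [← hread, hpb]
      exact hbp
    · intro hp
      refine ⟨andList (eqConj σ.args (argData σ) 0 p),
        List.mem_map_of_mem (List.mem_filter.2 ⟨by simp, hp⟩), ?_⟩
      exact (eval_andList_iff _ (typeOf_eqConj _ _ hok hargs 0 p)).2
        ((eqConj_iff _ _ hok hargs 0 p _).2 hread)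
  · intro a
    rw [quote_eq_body, quoteBodyAux]
    exact typeOf_mkLams σ 0 _ (htyBody a)

lemma eval_allTmAux_iff (σ : Ty) (hσ : GoodQuote σ) (I : Interp)
    (F : (Ty.arrow σ .base).sem) :
    (eval I (allTmAux σ (quote σ)) (.arrow (.arrow σ .base) .base) F = true
      ↔ ∀ c : σ.sem, F c = true) := by
  rw [allTmAux, eval_lam_app]
  rw [eval_andList_iff _ (fun s hs => by
    rcases List.mem_map.1 hs with ⟨c, _, rfl⟩
    exact typeOf_app' (typeOf_vr 0 (.arrow σ .base)) (hσ.2.2.1 c))]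
  constructor
  · intro h c
    have hm : c ∈ (Finset.univ : Finset σ.sem).toList := by simp
    have := h _ (List.mem_map_of_mem hm)
    rwa [eval_app' _ .base (hσ.2.2.1 c), eval_vr, hσ.1, update_same] at this
  · intro h s hs
    rcases List.mem_map.1 hs with ⟨c, _, rfl⟩
    rw [eval_app' _ .base (hσ.2.2.1 c), eval_vr, hσ.1, update_same]
    exact h c

lemma typeOf_allTmAux (σ : Ty) (hσ : GoodQuote σ) :
    typeOf (allTmAux σ (quote σ)) = some (.arrow (.arrow σ .base) .base) := by
  rw [allTmAux]
  have h : typeOf (andList (((Finset.univ : Finset σ.sem).toList).map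
      (fun a => .app (vr 0 (.arrow σ .base)) (quote σ a)))) = some .base :=
    typeOf_andList (fun s hs => by
      rcases List.mem_map.1 hs with ⟨c, _, rfl⟩
      exact typeOf_app' (typeOf_vr 0 (.arrow σ .base)) (hσ.2.2.1 c))
  simp [typeOf, h]

lemma eqTm_base_def :
    eqTm .base = .lam 0 .base (.lam 1 .base (equivTm (vr 0 .base) (vr 1 .base))) := by
  simp [eqTm, quoteEq]

lemma eqTm_arrow_def (σ τ : Ty) :
    eqTm (.arrow σ τ) = .lam 0 (.arrow σ τ) (.lam 1 (.arrow σ τ)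
      (.app (allTmAux σ (quote σ))
        (.lam 2 σ
          (.app (.app (eqTm τ) (.app (vr 0 (.arrow σ τ)) (vr 2 σ)))
            (.app (vr 1 (.arrow σ τ)) (vr 2 σ)))))) := by
  simp only [eqTm, quoteEq]
  rfl

lemma eqTm_base_good :
    (∀ (I : Interp) (a b : Ty.base.sem),
      eval I (eqTm .base) (.arrow .base (.arrow .base .base)) a b = true ↔ a = b) ∧
    typeOf (eqTm .base) = some (.arrow .base (.arrow .base .base)) := by
  constructor
  · intro I a b
    rw [eqTm_base_def, eval_lam_app, eval_lam_app,
      eval_equivTm _ (typeOf_vr 0 .base) (typeOf_vr 1 .base), eval_vr, eval_vr]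
    rw [update_same, update_ne _ _ (by simp), update_same]
  · rw [eqTm_base_def]; rfl

lemma eqTm_arrow_good (σ τ : Ty) (hσ : GoodQuote σ) (hτ : GoodQuote τ) :
    (∀ (I : Interp) (a b : (Ty.arrow σ τ).sem),
      eval I (eqTm (.arrow σ τ)) (.arrow (.arrow σ τ) (.arrow (.arrow σ τ) .base)) a b = true
        ↔ a = b) ∧
    typeOf (eqTm (.arrow σ τ)) = some (.arrow (.arrow σ τ) (.arrow (.arrow σ τ) .base)) := by
  have h1 : typeOf (Tm.app (vr 0 (.arrow σ τ)) (vr 2 σ)) = some τ :=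
    typeOf_app' (typeOf_vr 0 (.arrow σ τ)) (typeOf_vr 2 σ)
  have h2 : typeOf (Tm.app (vr 1 (.arrow σ τ)) (vr 2 σ)) = some τ :=
    typeOf_app' (typeOf_vr 1 (.arrow σ τ)) (typeOf_vr 2 σ)
  have h3 : typeOf (Tm.app (.app (eqTm τ) (.app (vr 0 (.arrow σ τ)) (vr 2 σ)))
      (.app (vr 1 (.arrow σ τ)) (vr 2 σ))) = some .base :=
    typeOf_app' (typeOf_app' hτ.2.2.2 h1) h2
  have htyInner : typeOf (Tm.lam 2 σ (.app (.app (eqTm τ) (.app (vr 0 (.arrow σ τ)) (vr 2 σ)))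
      (.app (vr 1 (.arrow σ τ)) (vr 2 σ)))) = some (.arrow σ .base) := by
    rw [typeOf_lam, h3]; rfl
  constructor
  · intro I a b
    rw [eqTm_arrow_def, eval_lam_app, eval_lam_app, eval_app' _ .base htyInner,
      eval_allTmAux_iff σ hσ]
    have hc : ∀ c : σ.sem,
        (eval ((I.update 0 (.arrow σ τ) a).update 1 (.arrow σ τ) b)
          (.lam 2 σ (.app (.app (eqTm τ) (.app (vr 0 (.arrow σ τ)) (vr 2 σ)))
            (.app (vr 1 (.arrow σ τ)) (vr 2 σ)))) (.arrow σ .base) c = true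
          ↔ a c = b c) := by
      intro c
      set K := ((I.update 0 (.arrow σ τ) a).update 1 (.arrow σ τ) b).update 2 σ c with hK
      have e2 : K 2 σ = c := update_same _ 2 σ c
      have e0 : K 0 (.arrow σ τ) = a := by
        rw [hK, update_ne _ _ (by simp), update_ne _ _ (by simp), update_same]
      have e1 : K 1 (.arrow σ τ) = b := by
        rw [hK, update_ne _ _ (by simp), update_same]
      rw [eval_lam_app, eval_app' _ .base h2, eval_app' _ (.arrow τ .base) h1,
        eval_app' _ τ (typeOf_vr 2 σ), eval_app' _ τ (typeOf_vr 2 σ),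
        eval_vr, eval_vr, eval_vr, ← hK, e2, e0, e1]
      exact hτ.2.1 _ (a c) (b c)
    constructor
    · intro h
      exact funext fun c => (hc c).1 (h c)
    · rintro rfl c
      exact (hc c).2 rfl
  · rw [eqTm_arrow_def]
    have happ : typeOf (Tm.app (allTmAux σ (quote σ))
        (.lam 2 σ (.app (.app (eqTm τ) (.app (vr 0 (.arrow σ τ)) (vr 2 σ)))
          (.app (vr 1 (.arrow σ τ)) (vr 2 σ))))) = some .base :=
      typeOf_app' (typeOf_allTmAux σ hσ) htyInner
    rw [typeOf_lam, typeOf_lam, happ]; rfl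

lemma goodQuote_all : ∀ σ : Ty, GoodQuote σ ∧ ∀ ρ ∈ σ.args, GoodQuote ρ := by
  intro σ
  induction σ with
  | base =>
    have hargs : ∀ ρ ∈ Ty.base.args, GoodQuote ρ := by
      intro ρ h; exact absurd h List.not_mem_nil
    have hq := quote_good .base hargs
    exact ⟨⟨hq.1, eqTm_base_good.1, hq.2, eqTm_base_good.2⟩, hargs⟩
  | arrow σ τ ihσ ihτ =>
    have hargs : ∀ ρ ∈ (Ty.arrow σ τ).args, GoodQuote ρ := by
      intro ρ h
      rcases List.mem_cons.1 h with rfl | h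
      · exact ihσ.1
      · exact ihτ.2 ρ h
    have hq := quote_good _ hargs
    have he := eqTm_arrow_good σ τ ihσ.1 ihτ.1
    exact ⟨⟨hq.1, he.1, hq.2, he.2⟩, hargs⟩

end Aux3

/-- `B̂(≐σ) a b = 1` iff `a = b`: the closed term `≐σ` denotes the
identity predicate on `Bσ`. -/
theorem eqTm_denotes (σ : Ty) (a b : σ.sem) (I : Interp) :
    eval I (eqTm σ) (.arrow σ (.arrow σ .base)) a b = true ↔ a = b :=
  (goodQuote_all σ).1.2.1 I a b

end PTT
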